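/- Let z₁, z₂, z₃ be pairwise distinct complex numbers. The points z₁, z₂, z₃ form an isosceles (non-degenerate) triangle — i.e., they are not collinear and at least two of the three distances |z₁−z₂|, |z₂−z₃|, |z₃−z₁| are equal — if and only if j(z₁, z₂, z₃) is real and j(z₁, z₂, z₃) < 1. -/

import Mathlib

open Complex

/-- The j-invariant as a function of the cross-ratio. -/
noncomputable def Jfun (l : ℂ) : ℂ := 4 * (l ^ 2 - l + 1) ^ 3 / (27 * l ^ 2 * (l - 1) ^ 2)

/-- The cross-ratio of four points of `ℂ`. -/
noncomputable def crossRatio (z1 z2 z3 z4 : ℂ) : ℂ :=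
  ((z1 - z3) / (z2 - z3)) * ((z2 - z4) / (z1 - z4))

/-- The j-invariant of a quadruple of points of `ℂ`. -/
noncomputable def jInv4 (z1 z2 z3 z4 : ℂ) : ℂ := Jfun (crossRatio z1 z2 z3 z4)

/-- The j-invariant of a triple of points of `ℂ` (fourth point at infinity). -/
noncomputable def jInv3 (z1 z2 z3 : ℂ) : ℂ := Jfun ((z1 - z3) / (z2 - z3))

/-- auxiliary real polynomials -/
noncomputable def Hq (x y : ℝ) : ℝ := (x^2-x+1)^2 + y^2*(2*x^2-2*x+3) + y^4

noncomputable def Nq (x y : ℝ) : ℝ := 729*((x^2+y^2)*((x-1)^2+y^2))^2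

noncomputable def Rq (x y : ℝ) : ℝ :=
  108*(((x^2+y^2)*((x-1)^2+y^2))^2*(x^2-y^2-x) + 3*((x^2+y^2)*((x-1)^2+y^2))^2
    + 3*((x^2+y^2)*((x-1)^2+y^2))*(x^2-y^2-x) + (x^2-y^2-x)^2 - (y*(2*x-1))^2)

noncomputable def Iq (x y : ℝ) : ℝ :=
  (108*(y*(2*x-1)*(x^2+y^2-1)*((x-1)^2+y^2-1))) * Hq x y

lemma real_key (x y : ℝ) (hp0 : 0 < x^2+y^2) (hq0 : 0 < (x-1)^2+y^2) :
    (y ≠ 0 ∧ ((x-1)^2+y^2 = 1 ∨ x^2+y^2 = 1 ∨ 2*x = 1)) ↔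
      (Iq x y = 0 ∧ Rq x y < Nq x y) := by
  constructor
  · rintro ⟨hy, hcase⟩
    have hy2 : 0 < y^2 := lt_of_le_of_ne (sq_nonneg y) (Ne.symm (pow_ne_zero 2 hy))
    rcases hcase with hq | hp | hx
    · refine ⟨by rw [Iq]; rw [hq]; ring, ?_⟩
      have key : Nq x y - Rq x y = 108*x*((4*x+1)^2*(2-x)) := by
        simp only [Nq, Rq]
        linear_combination ((-108)*x^8 + (324)*x^7 + (-216)*x^6*y^2 + (-27)*x^6 + (540)*x^5*y^2 + (-594)*x^5 + (567)*x^4*y^2 + (378)*x^4 + (108)*x^3*y^4 + (-1188)*x^3*y^2 + (216)*x^3 + (216)*x^2*y^6 + (1215)*x^2*y^4 + (1620)*x^2*y^2 + (1485)*x^2 + (-108)*x^1*y^6 + (-594)*x^1*y^4 + (648)*x^1*y^2 + (918)*x^1 + (108)*y^8 + (621)*y^6 + (1242)*y^4 + (621)*y^2 + (108)) * hq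
      have hxpos : 0 < x := by nlinarith
      have hxlt : x < 2 := by nlinarith
      have h4 : (0:ℝ) < (4*x+1)^2 := pow_pos (by linarith) 2
      nlinarith [mul_pos hxpos (mul_pos h4 (show (0:ℝ) < 2-x by linarith))]
    · refine ⟨by rw [Iq]; rw [hp]; ring, ?_⟩
      have key : Nq x y - Rq x y = 108*(1-x)*((5-4*x)^2*(x+1)) := by
        simp only [Nq, Rq]
        linear_combination ((-108)*x^8 + (540)*x^7 + (-216)*x^6*y^2 + (-783)*x^6 + (756)*x^5*y^2 + (27)*x^4*y^2 + (783)*x^4 + (-108)*x^3*y^4 + (-2160)*x^3*y^2 + (-540)*x^3 + (216)*x^2*y^6 + (1539)*x^2*y^4 + (3618)*x^2*y^2 + (1836)*x^2 + (-324)*x^1*y^6 + (-2160)*x^1*y^4 + (-3996)*x^1*y^2 + (-4320)*x^1 + (108)*y^8 + (729)*y^6 + (1971)*y^4 + (2592)*y^2 + (2700)) * hp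
      have hxlt : x < 1 := by nlinarith
      have hxgt : -1 < x := by nlinarith
      have h4 : (0:ℝ) < (5-4*x)^2 := pow_pos (by linarith) 2
      nlinarith [mul_pos (show (0:ℝ) < 1-x by linarith) (mul_pos h4 (show (0:ℝ) < x+1 by linarith))]
    · refine ⟨by rw [Iq]; rw [show (2:ℝ)*x-1 = 0 by linarith]; ring, ?_⟩
      have key : Nq x y - Rq x y = 27*((1/4+y^2)^2*((9/4+y^2)^2*(4*y^2))) := by
        simp only [Nq, Rq]
        linear_combination ((-54)*x^9 + (243)*x^8 + (-162)*x^7*y^2 + (-216)*x^7 + (567)*x^6*y^2 + (-378)*x^6 + (-108)*x^5*y^4 + (27/2 : ℝ)*x^5*y^2 + (594)*x^5 + (270)*x^4*y^4 + (-5805/4 : ℝ)*x^4*y^2 + (27)*x^4 + (108)*x^3*y^6 + (918)*x^3*y^4 + (11691/8 : ℝ)*x^3*y^2 + (-324)*x^3 + (-162)*x^2*y^6 + (-1647)*x^2*y^4 + (-7317/16 : ℝ)*x^2*y^2 + (108)*x^2 + (162)*x^1*y^8 + (945)*x^1*y^6 + (2403/2 : ℝ)*x^1*y^4 + (5643/32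 : ℝ)*x^1*y^2 + (-81)*y^8 + (-891/2 : ℝ)*y^6 + (-1269/4 : ℝ)*y^4 + (-4725/64 : ℝ)*y^2) * hx
      have h1 : (0:ℝ) < (1/4+y^2)^2 := pow_pos (by nlinarith) 2
      have h2 : (0:ℝ) < (9/4+y^2)^2 := pow_pos (by nlinarith) 2
      nlinarith [mul_pos h1 (mul_pos h2 (show (0:ℝ) < 4*y^2 by linarith))]
  · rintro ⟨hIp, hRp⟩
    have hy : y ≠ 0 := by
      intro h0y
      have key : Nq x y - Rq x y = -(27*(x^2-x)^2*((x^2-x-2)^2*(2*x-1)^2)) := by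
        simp only [Nq, Rq]
        linear_combination ((-324)*x^8*y^1 + (1296)*x^7*y^1 + (-216)*x^6*y^3 + (-540)*x^6*y^1 + (648)*x^5*y^3 + (-2916)*x^5*y^1 + (216)*x^4*y^5 + (1566)*x^4*y^3 + (4374)*x^4*y^1 + (-432)*x^3*y^5 + (-4212)*x^3*y^3 + (-2376)*x^3*y^1 + (324)*x^2*y^7 + (2052)*x^2*y^5 + (4050)*x^2*y^3 + (810)*x^2*y^1 + (-324)*x^1*y^7 + (-1836)*x^1*y^5 + (-1836)*x^1*y^3 + (-324)*x^1*y^1 + (108)*y^9 + (621)*y^7 + (1242)*y^5 + (621)*y^3 + (108)*y^1) * h0y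
      nlinarith [mul_nonneg (mul_nonneg (sq_nonneg (x^2-x)) (sq_nonneg (x^2-x-2)))
        (sq_nonneg (2*x-1)), key]
    refine ⟨hy, ?_⟩
    have h1 : (0:ℝ) < x^2-x+1 := by nlinarith [sq_nonneg (2*x-1)]
    have h2 : (0:ℝ) < 2*x^2-2*x+3 := by nlinarith [sq_nonneg (2*x-1)]
    have hH : 0 < Hq x y := by
      rw [Hq]
      nlinarith [pow_pos h1 2, mul_nonneg (sq_nonneg y) h2.le, pow_le_pow_left₀ (le_refl (0:ℝ)) (sq_nonneg y) 2, sq_nonneg (y^2)]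
    rw [Iq] at hIp
    have hA : 108*(y*(2*x-1)*(x^2+y^2-1)*((x-1)^2+y^2-1)) = 0 :=
      (mul_eq_zero.mp hIp).resolve_right hH.ne'
    have hB : y*(2*x-1)*(x^2+y^2-1)*((x-1)^2+y^2-1) = 0 := by
      have := mul_eq_zero.mp hA
      rcases this with h | h
      · norm_num at h
      · exact h
    rcases mul_eq_zero.mp hB with hB | h
    · rcases mul_eq_zero.mp hB with hB | h
      · rcases mul_eq_zero.mp hB with h | h
        · exact absurd h hy
        · exact Or.inr (Or.inr (by linarith))
      · exact Or.inr (Or.inl (by linarith))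
    · exact Or.inl (by linarith)

lemma key_im_re (l : ℂ) (h0 : l ≠ 0) (h1 : l ≠ 1) :
    (Jfun l).im * Nq l.re l.im = Iq l.re l.im ∧
      (Jfun l).re * Nq l.re l.im = Rq l.re l.im := by
  have h1' : l - 1 ≠ 0 := sub_ne_zero.mpr h1
  have hD : (27:ℂ)*l^2*(l-1)^2 ≠ 0 :=
    mul_ne_zero (mul_ne_zero (by norm_num) (pow_ne_zero _ h0)) (pow_ne_zero _ h1')
  have hnorm : Complex.normSq (27*l^2*(l-1)^2) = Nq l.re l.im := by
    rw [map_mul, map_mul, map_pow, map_pow]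
    simp only [Nq, Complex.normSq_apply, Complex.sub_re, Complex.sub_im, Complex.one_re,
      Complex.one_im, Complex.re_ofNat, Complex.im_ofNat]
    ring
  have hcc : ((Nq l.re l.im : ℝ) : ℂ) = (27*l^2*(l-1)^2) * (starRingEnd ℂ) (27*l^2*(l-1)^2) := by
    rw [Complex.mul_conj, hnorm]
  have hc : (starRingEnd ℂ) (27*l^2*(l-1)^2)
      = 27*(((starRingEnd ℂ) l)*((starRingEnd ℂ) l))*(((starRingEnd ℂ) l - 1)*((starRingEnd ℂ) l - 1)) := by
    simp only [map_mul, map_pow, map_sub, map_one, map_ofNat]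
    ring
  have hmain : Jfun l * ((Nq l.re l.im : ℝ) : ℂ)
      = (4*((l*l-l+1)*((l*l-l+1)*(l*l-l+1))))
        * (27*(((starRingEnd ℂ) l)*((starRingEnd ℂ) l))*(((starRingEnd ℂ) l - 1)*((starRingEnd ℂ) l - 1))) := by
    rw [Jfun, hcc, hc, div_mul_eq_mul_div, div_eq_iff hD]
    ring
  constructor
  · have h := congrArg Complex.im hmain
    simp only [Complex.mul_im, Complex.mul_re, Complex.add_re, Complex.add_im, Complex.sub_re,
      Complex.sub_im, Complex.one_re, Complex.one_im, Complex.re_ofNat, Complex.im_ofNat,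
      Complex.ofReal_re, Complex.ofReal_im, Complex.conj_re, Complex.conj_im,
      mul_zero, zero_mul, add_zero, zero_add] at h
    simp only [Iq, Hq]
    linear_combination h
  · have h := congrArg Complex.re hmain
    simp only [Complex.mul_im, Complex.mul_re, Complex.add_re, Complex.add_im, Complex.sub_re,
      Complex.sub_im, Complex.one_re, Complex.one_im, Complex.re_ofNat, Complex.im_ofNat,
      Complex.ofReal_re, Complex.ofReal_im, Complex.conj_re, Complex.conj_im,
      mul_zero, zero_mul, add_zero, zero_add] at h
    simp only [Rq]
    linear_combination h

lemma abs_eq_one_iff_normSq' (z : ℂ) : ‖z‖ = 1 ↔ Complex.normSq z = 1 := by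
  rw [← Complex.sq_norm]
  constructor
  · intro h; rw [h]; norm_num
  · intro h; nlinarith [norm_nonneg z]

lemma abs_eq_abs_iff_normSq (z w : ℂ) :
    ‖z‖ = ‖w‖ ↔ Complex.normSq z = Complex.normSq w := by
  rw [← Complex.sq_norm z, ← Complex.sq_norm w]
  constructor
  · intro h; rw [h]
  · intro h; exact sq_eq_sq₀ (norm_nonneg z) (norm_nonneg w) |>.mp h

lemma key_lemma (l : ℂ) (h0 : l ≠ 0) (h1 : l ≠ 1) :
    (l.im ≠ 0 ∧ (‖l-1‖ = 1 ∨ ‖l‖ = 1 ∨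
        ‖l‖ = ‖l-1‖)) ↔
      ((Jfun l).im = 0 ∧ (Jfun l).re < 1) := by
  obtain ⟨him, hre⟩ := key_im_re l h0 h1
  have h1' : l - 1 ≠ 0 := sub_ne_zero.mpr h1
  have hp0 : 0 < l.re^2 + l.im^2 := by
    have := Complex.normSq_pos.mpr h0
    rw [Complex.normSq_apply] at this
    nlinarith [this]
  have hq0 : 0 < (l.re-1)^2 + l.im^2 := by
    have := Complex.normSq_pos.mpr h1'
    rw [Complex.normSq_apply, Complex.sub_re, Complex.sub_im, Complex.one_re, Complex.one_im] at this
    nlinarith [this]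
  have hN : 0 < Nq l.re l.im := by
    have h := pow_pos (mul_pos hp0 hq0) 2
    rw [Nq]; nlinarith [h]
  have himiff : (Jfun l).im = 0 ↔ Iq l.re l.im = 0 := by
    constructor
    · intro h; rw [← him, h, zero_mul]
    · intro h; exact (mul_eq_zero.mp (him.trans h)).resolve_right hN.ne'
  have hreiff : (Jfun l).re < 1 ↔ Rq l.re l.im < Nq l.re l.im := by
    rw [show (Jfun l).re = Rq l.re l.im / Nq l.re l.im from
      (eq_div_iff hN.ne').mpr hre, div_lt_one hN]
  have e1 : ‖l-1‖ = 1 ↔ (l.re-1)^2 + l.im^2 = 1 := by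
    rw [abs_eq_one_iff_normSq', Complex.normSq_apply, Complex.sub_re, Complex.sub_im,
      Complex.one_re, Complex.one_im]
    constructor <;> intro h <;> nlinarith [h]
  have e2 : ‖l‖ = 1 ↔ l.re^2 + l.im^2 = 1 := by
    rw [abs_eq_one_iff_normSq', Complex.normSq_apply]
    constructor <;> intro h <;> nlinarith [h]
  have e3 : ‖l‖ = ‖l-1‖ ↔ 2*l.re = 1 := by
    rw [abs_eq_abs_iff_normSq, Complex.normSq_apply, Complex.normSq_apply,
      Complex.sub_re, Complex.sub_im, Complex.one_re, Complex.one_im]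
    constructor <;> intro h <;> nlinarith [h]
  rw [himiff, hreiff, e1, e2, e3]
  exact real_key l.re l.im hp0 hq0

theorem isosceles_iff_jInv3_real_lt_one (z1 z2 z3 : ℂ)
    (h12 : z1 ≠ z2) (h13 : z1 ≠ z3) (h23 : z2 ≠ z3) :
    (((z3 - z1) / (z2 - z1)).im ≠ 0 ∧
        (‖z1 - z2‖ = ‖z2 - z3‖ ∨
         ‖z2 - z3‖ = ‖z3 - z1‖ ∨
         ‖z3 - z1‖ = ‖z1 - z2‖)) ↔
      ((jInv3 z1 z2 z3).im = 0 ∧ (jInv3 z1 z2 z3).re < 1) := by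
  have h13' : z1 - z3 ≠ 0 := sub_ne_zero.mpr h13
  have h23' : z2 - z3 ≠ 0 := sub_ne_zero.mpr h23
  have h12' : z1 - z2 ≠ 0 := sub_ne_zero.mpr h12
  have h21' : z2 - z1 ≠ 0 := sub_ne_zero.mpr (Ne.symm h12)
  set l : ℂ := (z1 - z3) / (z2 - z3) with hldef
  have hl0 : l ≠ 0 := div_ne_zero h13' h23'
  have hl1 : l ≠ 1 := by
    intro h
    rw [hldef, div_eq_one_iff_eq h23'] at h
    exact h12 (by linear_combination h)
  have hJ : jInv3 z1 z2 z3 = Jfun l := rfl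
  have habs23 : ‖z2 - z3‖ ≠ 0 := (norm_ne_zero_iff.mpr h23')
  have hl1e : l - 1 = (z1 - z2) / (z2 - z3) := by
    rw [hldef, div_sub_one h23']
    congr 1
    ring
  have B1 : ‖z1 - z2‖ = ‖z2 - z3‖ ↔ ‖l - 1‖ = 1 := by
    rw [hl1e, norm_div, div_eq_one_iff_eq habs23]
  have habsl : ‖l‖ = ‖z3 - z1‖ / ‖z2 - z3‖ := by
    rw [hldef, norm_div, norm_sub_rev]
  have B2 : ‖z2 - z3‖ = ‖z3 - z1‖ ↔ ‖l‖ = 1 := by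
    rw [habsl, div_eq_one_iff_eq habs23, eq_comm]
  have B3 : ‖z3 - z1‖ = ‖z1 - z2‖ ↔
      ‖l‖ = ‖l - 1‖ := by
    rw [habsl, hl1e, norm_div, div_eq_div_iff habs23 habs23]
    constructor
    · intro h; rw [h]
    · intro h; exact mul_right_cancel₀ habs23 h
  have hdiv : ∀ (z w : ℂ), w ≠ 0 → (z / w).im = (z * (starRingEnd ℂ) w).im / Complex.normSq w := by
    intro z w hw
    have hcw : (starRingEnd ℂ) w ≠ 0 := by
      simpa using hw
    rw [show z / w = z * (starRingEnd ℂ) w / ((Complex.normSq w : ℝ) : ℂ) by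
      rw [← Complex.mul_conj, div_eq_div_iff hw (mul_ne_zero hw hcw)]; ring]
    rw [Complex.div_ofReal_im]
  have A : ((z3 - z1) / (z2 - z1)).im ≠ 0 ↔ l.im ≠ 0 := by
    rw [hldef, hdiv _ _ h21', hdiv _ _ h23']
    have n1 : Complex.normSq (z2 - z1) ≠ 0 := (Complex.normSq_pos.mpr h21').ne'
    have n2 : Complex.normSq (z2 - z3) ≠ 0 := (Complex.normSq_pos.mpr h23').ne'
    rw [not_iff_not, div_eq_zero_iff, div_eq_zero_iff, or_iff_left n1, or_iff_left n2]
    have E : ((z1 - z3) * (starRingEnd ℂ) (z2 - z3)).im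
        = -(((z3 - z1) * (starRingEnd ℂ) (z2 - z1)).im) := by
      simp only [Complex.mul_im, map_sub, Complex.sub_re, Complex.sub_im,
        Complex.conj_re, Complex.conj_im]
      ring
    rw [E, neg_eq_zero]
  rw [hJ, ← key_lemma l hl0 hl1]
  exact and_congr A (or_congr B1 (or_congr B2 B3))
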